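/- If G is a good graph of order n with δ(G) = 2 and Δ(G) = n − 2, then every vertex of degree 2 in G has both of its neighbors of degree n − 2. -/
import Mathlib


/-- Number of k-nearly independent vertex subsets: subsets whose induced subgraph has exactly k edges. -/
def sigmaK {V : Type*} [Fintype V] [DecidableEq V] (G : SimpleGraph V) [DecidableRel G.Adj] (k : ℕ) : ℕ :=
  (Finset.univ.filter fun s : Finset V =>
    (s.sym2.filter fun e => e ∈ G.edgeSet).card = k).card

/-- A graph is good if for every edge uv, N[u] ∪ N[v] = V(G). -/
def IsGoodGraph {V : Type*} (G : SimpleGraph V) : Prop :=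
  ∀ u v : V, G.Adj u v →
    (insert u (G.neighborSet u)) ∪ (insert v (G.neighborSet v)) = Set.univ

theorem stmt15 {V : Type*} [Fintype V] [Nonempty V] (G : SimpleGraph V) [DecidableRel G.Adj]
    (hgood : IsGoodGraph G)
    (hmin : G.minDegree = 2) (hmax : G.maxDegree = Fintype.card V - 2) :
    ∀ v : V, G.degree v = 2 → ∀ u : V, G.Adj v u → G.degree u = Fintype.card V - 2 := by
  classical
  intro v hv u huv
  have hu : u ∈ G.neighborFinset v := by simpa using huv
  obtain ⟨a, b, hab, h2⟩ := Finset.card_eq_two.mp hv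
  -- find the other neighbor w
  obtain ⟨w, huw, hNv⟩ : ∃ w, u ≠ w ∧ G.neighborFinset v = {u, w} := by
    rw [h2] at hu
    simp only [Finset.mem_insert, Finset.mem_singleton] at hu
    rcases hu with rfl | rfl
    · exact ⟨b, hab, h2⟩
    · exact ⟨a, fun h => hab h.symm, by rw [h2, Finset.pair_comm]⟩
  have hgd := hgood v u huv
  have hsub : Finset.univ \ {u, w} ⊆ G.neighborFinset u := by
    intro x hx
    simp only [Finset.mem_sdiff, Finset.mem_insert, Finset.mem_singleton, not_or] at hx
    obtain ⟨-, hxu, hxw⟩ := hx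
    by_cases hxv : x = v
    · subst hxv; simpa using huv.symm
    · have : x ∈ (insert v (G.neighborSet v)) ∪ (insert u (G.neighborSet u)) := by
        rw [hgd]; trivial
      rcases this with h | h
      · rcases h with h | h
        · exact absurd h hxv
        · have : x ∈ G.neighborFinset v := by simpa using h
          rw [hNv] at this
          simp only [Finset.mem_insert, Finset.mem_singleton] at this
          rcases this with rfl | rfl
          · exact absurd rfl hxu
          · exact absurd rfl hxw
      · rcases h with h | h
        · exact absurd h hxu
        · simpa using h
  have hcard : (Finset.univ \ ({u, w} : Finset V)).card = Fintype.card V - 2 := by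
    rw [Finset.card_sdiff_of_subset (Finset.subset_univ _), Finset.card_univ,
      Finset.card_pair huw]
  have hlow : Fintype.card V - 2 ≤ G.degree u := by
    rw [SimpleGraph.degree, ← hcard]
    exact Finset.card_le_card hsub
  have hhigh : G.degree u ≤ Fintype.card V - 2 := hmax ▸ G.degree_le_maxDegree u
  omega
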